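/- With f₀ = X⁵ − 1 and g₀ = (X+1)(X²+1)², the vectors ε = v − A²v and ε′ = A³v + A⁴v − Av satisfy h(ε,ε) = 0, h(ε′,ε′) = 0 and h(ε,ε′) = 0, and they are linearly independent; hence they span a two-dimensional totally isotropic subspace of (V, h), so the Witt index of h over ℚ is at least 2. -/

import Mathlib

open Polynomial

noncomputable section

/-- `f₀ = X⁵ - 1`. -/
def fPoly : Polynomial ℤ := X ^ 5 - 1

/-- `g₀ = (X+1)(X²+1)²`. -/
def gPoly : Polynomial ℤ := (X + 1) * (X ^ 2 + 1) ^ 2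

/-- `f₀` viewed over `ℚ`. -/
def fQ : Polynomial ℚ := fPoly.map (Int.castRingHom ℚ)

/-- `V = ℚ[X]/(f₀)`. -/
abbrev V : Type := AdjoinRoot fQ

/-- the image of `X` in `V`; multiplication by `ξ` is the companion operator `A`. -/
def ξ : V := AdjoinRoot.root fQ

/-- A subspace is totally isotropic for a bilinear form. -/
def IsTotallyIsotropic {K W : Type*} [Field K] [AddCommGroup W] [Module K W]
    (h : W →ₗ[K] W →ₗ[K] K) (U : Submodule K W) : Prop :=
  ∀ w ∈ U, ∀ w' ∈ U, h w w' = 0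

lemma fQ_eq : fQ = X ^ 5 - 1 := by
  simp [fQ, fPoly, Polynomial.map_sub, Polynomial.map_pow]

lemma hξ5 : ξ ^ 5 = (1 : V) := by
  have h : (AdjoinRoot.mk fQ) (X ^ 5 - 1) = 0 := by rw [← fQ_eq]; exact AdjoinRoot.mk_self
  simpa [map_sub, map_pow, sub_eq_zero, ξ] using h

lemma hcancel (a b : V) (hab : ξ * a = ξ * b) : a = b := by
  have h4 : ξ ^ 4 * ξ = 1 := by linear_combination hξ5
  calc a = ξ^4 * ξ * a := by rw [h4]; ring
    _ = ξ^4 * ξ * b := by rw [mul_assoc, hab, mul_assoc]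
    _ = b := by rw [h4]; ring

lemma mkg : AdjoinRoot.mk fQ (X ^ 5 - gPoly.map (Int.castRingHom ℚ)) =
    ξ^5 - (ξ + 1) * (ξ^2 + 1)^2 := by
  simp [gPoly, Polynomial.map_mul, Polynomial.map_add, Polynomial.map_pow, map_sub, map_add,
    map_mul, map_pow, map_one, ξ]

lemma fQ_degree : fQ.degree = 5 := by
  rw [fQ_eq]
  compute_degree!

lemma mk_small_eq_zero (P : Polynomial ℚ) (hdeg : P.degree ≤ 4)
    (h0 : AdjoinRoot.mk fQ P = 0) : P = 0 := by
  refine Polynomial.eq_zero_of_dvd_of_degree_lt (AdjoinRoot.mk_eq_zero.mp h0) ?_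
  rw [fQ_degree]
  exact lt_of_le_of_lt hdeg (by norm_num)

/-- For `f₀ = X⁵−1`, `g₀ = (X+1)(X²+1)²`, the vectors
`ε = v − A²v` and `ε′ = A³v + A⁴v − Av` are isotropic, mutually orthogonal and
linearly independent; they span a two-dimensional totally isotropic subspace, so
the Witt index of `h` over `ℚ` is at least `2`. -/
theorem stmt_10
    (Be Ce : V →ₗ[ℚ] V)
    (hBe1 : ∀ k : ℕ, k ≤ 3 → Be (ξ ^ k) = ξ ^ (k + 1))
    (hBe2 : Be (ξ ^ 4) = AdjoinRoot.mk fQ (X ^ 5 - gPoly.map (Int.castRingHom ℚ)))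
    (hCe : ∀ w : V, ξ * Ce w = Be w)
    (v : V) (hv : v = Ce (ξ ^ 4) - ξ ^ 4)
    (h : V →ₗ[ℚ] V →ₗ[ℚ] ℚ)
    (hsymm : ∀ w w' : V, h w w' = h w' w)
    (hAinv : ∀ w w' : V, h (ξ * w) (ξ * w') = h w w')
    (hBinv : ∀ w w' : V, h (Be w) (Be w') = h w w')
    (hnorm : h (ξ ^ 4) v = 1)
    (ε ε' : V)
    (hε : ε = v - ξ ^ 2 * v)
    (hε' : ε' = ξ ^ 3 * v + ξ ^ 4 * v - ξ * v) :
    h ε ε = 0 ∧ h ε' ε' = 0 ∧ h ε ε' = 0 ∧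
      LinearIndependent ℚ ![ε, ε'] ∧
      IsTotallyIsotropic h (Submodule.span ℚ ({ε, ε'} : Set V)) ∧
      Module.finrank ℚ (Submodule.span ℚ ({ε, ε'} : Set V)) = 2 ∧
      ∃ U : Submodule ℚ V, IsTotallyIsotropic h U ∧ 2 ≤ Module.finrank ℚ U := by
  -- `Ce` fixes low powers
  have hC : ∀ k : ℕ, k ≤ 3 → Ce (ξ ^ k) = ξ ^ k := by
    intro k hk
    apply hcancel
    rw [hCe, hBe1 k hk, pow_succ]; ring
  have hC4 : Ce (ξ ^ 4) = ξ ^ 4 + v := by rw [hv]; ring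
  -- explicit value of ξ * v
  have hBv : ξ * (ξ ^ 4 + v) = ξ^5 - (ξ + 1) * (ξ^2 + 1)^2 := by
    rw [← hC4, hCe, hBe2, mkg]
  have hw1 : ξ * v = -(2*(1:V) + ξ + 2*ξ^2 + 2*ξ^3 + ξ^4) := by
    linear_combination hBv - hξ5
  have hw2 : ξ^2 * v = -((1:V) + 2*ξ + ξ^2 + 2*ξ^3 + 2*ξ^4) := by
    linear_combination ξ * hw1 - hξ5
  have hw3 : ξ^3 * v = -(2*(1:V) + ξ + 2*ξ^2 + ξ^3 + 2*ξ^4) := by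
    linear_combination ξ * hw2 - 2 * hξ5
  have hw4 : ξ^4 * v = -(2*(1:V) + 2*ξ + ξ^2 + 2*ξ^3 + ξ^4) := by
    linear_combination ξ * hw3 - 2 * hξ5
  have hv0 : v = -((1:V) + 2*ξ + 2*ξ^2 + ξ^3 + 2*ξ^4) := by
    linear_combination ξ * hw4 - (v + 1) * hξ5
  -- basis expressions of ε, ε'
  have hεb : ε = ξ^3 - ξ^2 := by
    linear_combination hε + hv0 - hw2
  have hε'b : ε' = -(2*(1:V) + 2*ξ + ξ^2 + ξ^3 + 2*ξ^4) := by
    linear_combination hε' + hw3 + hw4 - hw1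
  -- invariance under C
  have hCinv : ∀ w w' : V, h (Ce w) (Ce w') = h w w' := by
    intro w w'
    rw [← hAinv (Ce w) (Ce w'), hCe, hCe]
    exact hBinv w w'
  -- the values h(ξ^k, v)
  have hdk : ∀ k : ℕ, k ≤ 3 → h (ξ^k) v = 0 := by
    intro k hk
    have t := hCinv (ξ^k) (ξ^4)
    rw [hC k hk, hC4, map_add] at t
    linarith
  have dv0 : h v (ξ^0) = 0 := by rw [hsymm]; exact hdk 0 (by norm_num)
  have dv1 : h v (ξ^1) = 0 := by rw [hsymm]; exact hdk 1 (by norm_num)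
  have dv2 : h v (ξ^2) = 0 := by rw [hsymm]; exact hdk 2 (by norm_num)
  have dv3 : h v (ξ^3) = 0 := by rw [hsymm]; exact hdk 3 (by norm_num)
  have hv4 : h v (ξ^4) = 1 := by rw [hsymm]; exact hnorm
  have hApow : ∀ (n : ℕ) (w w' : V), h (ξ^n * w) (ξ^n * w') = h w w' := by
    intro n
    induction n with
    | zero => intro w w'; simp
    | succ n ih =>
      intro w w'
      rw [show ξ^(n+1) * w = ξ^n * (ξ * w) from by ring,
        show ξ^(n+1) * w' = ξ^n * (ξ * w') from by ring, ih, hAinv]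
  -- the 25 pairings with basis vectors
  have E0_0 : h v (1:V) = 0 := by simpa using dv0
  have E0_1 : h v ξ = 0 := by simpa using dv1
  have E0_2 : h v (ξ^2) = 0 := dv2
  have E0_3 : h v (ξ^3) = 0 := dv3
  have E0_4 : h v (ξ^4) = 1 := hv4
  have E1_0 : h (ξ^1 * v) ((1:V)) = 1 := by
    have t := hApow 1 v (ξ^4)
    rw [show (ξ^1 * ξ^4 : V) = (1:V) from by linear_combination ((ξ:V)^0) * hξ5] at t
    rw [t]
    exact hv4
  have E1_1 : h (ξ^1 * v) (ξ) = 0 := by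
    have t := hApow 1 v (ξ^0)
    rw [show (ξ^1 * ξ^0 : V) = ξ from by ring] at t
    rw [t]
    exact dv0
  have E1_2 : h (ξ^1 * v) (ξ^2) = 0 := by
    have t := hApow 1 v (ξ^1)
    rw [show (ξ^1 * ξ^1 : V) = ξ^2 from by ring] at t
    rw [t]
    exact dv1
  have E1_3 : h (ξ^1 * v) (ξ^3) = 0 := by
    have t := hApow 1 v (ξ^2)
    rw [show (ξ^1 * ξ^2 : V) = ξ^3 from by ring] at t
    rw [t]
    exact dv2
  have E1_4 : h (ξ^1 * v) (ξ^4) = 0 := by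
    have t := hApow 1 v (ξ^3)
    rw [show (ξ^1 * ξ^3 : V) = ξ^4 from by ring] at t
    rw [t]
    exact dv3
  have E2_0 : h (ξ^2 * v) ((1:V)) = 0 := by
    have t := hApow 2 v (ξ^3)
    rw [show (ξ^2 * ξ^3 : V) = (1:V) from by linear_combination ((ξ:V)^0) * hξ5] at t
    rw [t]
    exact dv3
  have E2_1 : h (ξ^2 * v) (ξ) = 1 := by
    have t := hApow 2 v (ξ^4)
    rw [show (ξ^2 * ξ^4 : V) = ξ from by linear_combination ((ξ:V)^1) * hξ5] at t
    rw [t]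
    exact hv4
  have E2_2 : h (ξ^2 * v) (ξ^2) = 0 := by
    have t := hApow 2 v (ξ^0)
    rw [show (ξ^2 * ξ^0 : V) = ξ^2 from by ring] at t
    rw [t]
    exact dv0
  have E2_3 : h (ξ^2 * v) (ξ^3) = 0 := by
    have t := hApow 2 v (ξ^1)
    rw [show (ξ^2 * ξ^1 : V) = ξ^3 from by ring] at t
    rw [t]
    exact dv1
  have E2_4 : h (ξ^2 * v) (ξ^4) = 0 := by
    have t := hApow 2 v (ξ^2)
    rw [show (ξ^2 * ξ^2 : V) = ξ^4 from by ring] at t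
    rw [t]
    exact dv2
  have E3_0 : h (ξ^3 * v) ((1:V)) = 0 := by
    have t := hApow 3 v (ξ^2)
    rw [show (ξ^3 * ξ^2 : V) = (1:V) from by linear_combination ((ξ:V)^0) * hξ5] at t
    rw [t]
    exact dv2
  have E3_1 : h (ξ^3 * v) (ξ) = 0 := by
    have t := hApow 3 v (ξ^3)
    rw [show (ξ^3 * ξ^3 : V) = ξ from by linear_combination ((ξ:V)^1) * hξ5] at t
    rw [t]
    exact dv3
  have E3_2 : h (ξ^3 * v) (ξ^2) = 1 := by
    have t := hApow 3 v (ξ^4)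
    rw [show (ξ^3 * ξ^4 : V) = ξ^2 from by linear_combination ((ξ:V)^2) * hξ5] at t
    rw [t]
    exact hv4
  have E3_3 : h (ξ^3 * v) (ξ^3) = 0 := by
    have t := hApow 3 v (ξ^0)
    rw [show (ξ^3 * ξ^0 : V) = ξ^3 from by ring] at t
    rw [t]
    exact dv0
  have E3_4 : h (ξ^3 * v) (ξ^4) = 0 := by
    have t := hApow 3 v (ξ^1)
    rw [show (ξ^3 * ξ^1 : V) = ξ^4 from by ring] at t
    rw [t]
    exact dv1
  have E4_0 : h (ξ^4 * v) ((1:V)) = 0 := by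
    have t := hApow 4 v (ξ^1)
    rw [show (ξ^4 * ξ^1 : V) = (1:V) from by linear_combination ((ξ:V)^0) * hξ5] at t
    rw [t]
    exact dv1
  have E4_1 : h (ξ^4 * v) (ξ) = 0 := by
    have t := hApow 4 v (ξ^2)
    rw [show (ξ^4 * ξ^2 : V) = ξ from by linear_combination ((ξ:V)^1) * hξ5] at t
    rw [t]
    exact dv2
  have E4_2 : h (ξ^4 * v) (ξ^2) = 0 := by
    have t := hApow 4 v (ξ^3)
    rw [show (ξ^4 * ξ^3 : V) = ξ^2 from by linear_combination ((ξ:V)^2) * hξ5] at t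
    rw [t]
    exact dv3
  have E4_3 : h (ξ^4 * v) (ξ^3) = 1 := by
    have t := hApow 4 v (ξ^4)
    rw [show (ξ^4 * ξ^4 : V) = ξ^3 from by linear_combination ((ξ:V)^3) * hξ5] at t
    rw [t]
    exact hv4
  have E4_4 : h (ξ^4 * v) (ξ^4) = 0 := by
    have t := hApow 4 v (ξ^0)
    rw [show (ξ^4 * ξ^0 : V) = ξ^4 from by ring] at t
    rw [t]
    exact dv0
  -- bilinear expansion helpers
  have hmul2 : ∀ w x : V, h w (2 * x) = 2 * h w x := by
    intro w x
    have h2 : (2:V) * x = (2:ℚ) • x := by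
      rw [Algebra.smul_def, map_ofNat]
    rw [h2, map_smul, smul_eq_mul]
  have key1 : ∀ w : V, h ε w = h v w - h (ξ^2 * v) w := by
    intro w
    rw [hε, map_sub]
    simp only [LinearMap.sub_apply]
  have key2 : ∀ w : V, h ε' w = h (ξ^3 * v) w + h (ξ^4 * v) w - h (ξ^1 * v) w := by
    intro w
    rw [show ε' = ξ^3 * v + ξ^4 * v - ξ^1 * v from by rw [hε']; ring, map_sub, map_add]
    simp only [LinearMap.sub_apply, LinearMap.add_apply]
  -- the three isotropy relations
  have He : h ε ε = 0 := by
    rw [key1, hεb]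
    simp only [map_sub, E0_2, E0_3, E2_2, E2_3]
    ring
  have He' : h ε' ε' = 0 := by
    rw [key2, hε'b]
    simp only [map_neg, map_add, hmul2, E1_0, E1_1, E1_2, E1_3, E1_4,
      E3_0, E3_1, E3_2, E3_3, E3_4, E4_0, E4_1, E4_2, E4_3, E4_4]
    ring
  have Hee' : h ε ε' = 0 := by
    rw [key1, hε'b]
    simp only [map_neg, map_add, hmul2, E0_0, E0_1, E0_2, E0_3, E0_4,
      E2_0, E2_1, E2_2, E2_3, E2_4]
    ring
  have He'e : h ε' ε = 0 := by rw [hsymm]; exact Hee'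
  -- linear independence
  have hLI : LinearIndependent ℚ ![ε, ε'] := by
    rw [linearIndependent_fin2]
    constructor
    · show ε' ≠ 0
      intro hcon
      have hmk : AdjoinRoot.mk fQ (-(2*1 + 2*X + X^2 + X^3 + 2*X^4)) = 0 := by
        have : AdjoinRoot.mk fQ (-(2*1 + 2*X + X^2 + X^3 + 2*X^4)) = ε' := by
          rw [hε'b]
          simp only [map_neg, map_add, map_mul, map_pow, map_one, map_ofNat,
            AdjoinRoot.mk_X, ξ]
        rw [this, hcon]
      have hP0 := mk_small_eq_zero _ (by compute_degree) hmk
      have e0 := congrArg (Polynomial.eval 0) hP0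
      simp at e0
    · show ∀ a : ℚ, a • ε' ≠ ε
      intro a hcon
      have hmk : AdjoinRoot.mk fQ (C a * (-(2*1 + 2*X + X^2 + X^3 + 2*X^4)) - (X^3 - X^2)) = 0 := by
        have : AdjoinRoot.mk fQ (C a * (-(2*1 + 2*X + X^2 + X^3 + 2*X^4)) - (X^3 - X^2)) =
            a • ε' - ε := by
          rw [hε'b, hεb, Algebra.smul_def]
          simp only [map_neg, map_add, map_sub, map_mul, map_pow, map_one, map_ofNat,
            AdjoinRoot.mk_X, AdjoinRoot.mk_C, ξ, AdjoinRoot.algebraMap_eq]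
        rw [this, hcon, sub_self]
      have hP0 := mk_small_eq_zero _ (by compute_degree) hmk
      have e0 := congrArg (Polynomial.eval 0) hP0
      have e1 := congrArg (Polynomial.eval (-1)) hP0
      simp at e0 e1
      norm_num [e0] at e1
  -- totally isotropic
  have iso : IsTotallyIsotropic h (Submodule.span ℚ ({ε, ε'} : Set V)) := by
    have base : ∀ x ∈ ({ε, ε'} : Set V), ∀ y ∈ ({ε, ε'} : Set V), h x y = 0 := by
      intro x hx y hy
      simp only [Set.mem_insert_iff, Set.mem_singleton_iff] at hx hy
      rcases hx with rfl | rfl <;> rcases hy with rfl | rfl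
      · exact He
      · exact Hee'
      · exact He'e
      · exact He'
    intro w hw w' hw'
    have step1 : ∀ x ∈ ({ε, ε'} : Set V), h x w' = 0 := by
      intro x hx
      refine Submodule.span_induction (p := fun y _ => h x y = 0) ?_ ?_ ?_ ?_ hw'
      · exact fun y hy => base x hx y hy
      · simp
      · intro a b _ _ ha hb
        rw [map_add, ha, hb, add_zero]
      · intro c a _ ha
        rw [map_smul, ha, smul_zero]
    refine Submodule.span_induction (p := fun y _ => h y w' = 0) ?_ ?_ ?_ ?_ hw
    · exact step1
    · simp
    · intro a b _ _ ha hb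
      rw [map_add, LinearMap.add_apply, ha, hb, add_zero]
    · intro c a _ ha
      rw [map_smul, LinearMap.smul_apply, ha, smul_zero]
  -- rank
  have hrange : Set.range ![ε, ε'] = ({ε, ε'} : Set V) := by
    ext x
    simp only [Matrix.range_cons, Matrix.range_empty, Set.mem_insert_iff,
      Set.mem_singleton_iff, Set.union_empty, Set.union_singleton]
    tauto
  have hfr : Module.finrank ℚ (Submodule.span ℚ ({ε, ε'} : Set V)) = 2 := by
    rw [← hrange]
    rw [finrank_span_eq_card hLI]
    simp
  exact ⟨He, He', Hee', hLI, iso, hfr,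
    ⟨Submodule.span ℚ ({ε, ε'} : Set V), iso, by rw [hfr]⟩⟩
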